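/- The maturity value of the asset with dividends decomposes around the Lehman proxy as S^{(y,δ)}_T = S̄_T + Σ_{i=1}^{n} ((T − t_i)/T)·δ̂_i·(M_T − M_T/M_{t_i}) + Σ_{i=1}^{n} (t_i/T)·δ̂_i·(1 − M_T/M_{t_i}). -/

import Mathlib

open Finset

/-- The maturity value of the asset with dividends decomposes around the
Lehman proxy as
`S^{(y,δ)}_T = S̄_T + Σ_{i=1}^{n} ((T − t_i)/T)·δ̂_i·(M_T − M_T/M_{t_i})
             + Σ_{i=1}^{n} (t_i/T)·δ̂_i·(1 − M_T/M_{t_i})`,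
where `δ̂_i = δ_i·π_{i,n}·D_{t_i}/D_T`, `X^n_T = Σ_i ((T − t_i)/T)·δ̂_i`,
`X^f_T = Σ_i (t_i/T)·δ̂_i` and `S̄_T = (π_{0,n}·S_0/D_T − X^n_T)·M_T − X^f_T`. -/
theorem statement2
    (n : ℕ) (hn : 1 ≤ n) (T : ℝ) (hT : 0 < T)
    (td : ℕ → ℝ) (htd0 : td 0 = 0)
    (htdmono : ∀ i, i < n → td i < td (i + 1)) (htdn : td n ≤ T)
    (y δ : ℕ → ℝ)
    (hy : ∀ i, 1 ≤ i → i ≤ n → 0 ≤ y i ∧ y i < 1)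
    (hδ : ∀ i, 1 ≤ i → i ≤ n → 0 ≤ δ i)
    (S : ℝ → ℝ) (hS : ∀ u, 0 ≤ u → u ≤ T → 0 < S u)
    (Sd : ℝ → ℝ)
    (hSd0 : ∀ u, 0 ≤ u → u < td 1 → Sd u = S u)
    (hjump : ∀ i, 1 ≤ i → i ≤ n →
      Sd (td i) = (1 - y i) * Sd (td (i - 1)) * S (td i) / S (td (i - 1)) - δ i)
    (hprop : ∀ i, 1 ≤ i → i ≤ n → ∀ u, td i ≤ u →
      ((i < n ∧ u < td (i + 1)) ∨ (i = n ∧ u ≤ T)) →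
      Sd u = Sd (td i) * S u / S (td i))
    (M D : ℝ → ℝ)
    (hM : ∀ u, 0 ≤ u → u ≤ T → 0 < M u) (hD : ∀ u, 0 ≤ u → u ≤ T → 0 < D u)
    (hM0 : M 0 = 1) (hD0 : D 0 = 1)
    (hSM : ∀ u, 0 ≤ u → u ≤ T → S u = S 0 * M u / D u) :
    Sd T = (((∏ j ∈ Finset.Icc 1 n, (1 - y j)) * S 0 / D T
              - ∑ i ∈ Finset.Icc 1 n, ((T - td i) / T)
                  * (δ i * (∏ j ∈ Finset.Icc (i + 1) n, (1 - y j)) * D (td i) / D T)) * M T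
            - ∑ i ∈ Finset.Icc 1 n, (td i / T)
                * (δ i * (∏ j ∈ Finset.Icc (i + 1) n, (1 - y j)) * D (td i) / D T))
      + ∑ i ∈ Finset.Icc 1 n,
          ((T - td i) / T) * (δ i * (∏ j ∈ Finset.Icc (i + 1) n, (1 - y j)) * D (td i) / D T)
            * (M T - M T / M (td i))
      + ∑ i ∈ Finset.Icc 1 n,
          (td i / T) * (δ i * (∏ j ∈ Finset.Icc (i + 1) n, (1 - y j)) * D (td i) / D T)
            * (1 - M T / M (td i)) := by
  -- monotonicity of td
  have hmono : ∀ j, j ≤ n → ∀ i, i ≤ j → td i ≤ td j := by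
    intro j hj
    induction j with
    | zero => intro i hi; interval_cases i; exact le_rfl
    | succ k ih =>
      intro i hi
      rcases Nat.eq_or_lt_of_le hi with h | h
      · rw [h]
      · exact le_trans (ih (by omega) i (by omega)) (le_of_lt (htdmono k (by omega)))
  have hbd : ∀ i, i ≤ n → 0 ≤ td i ∧ td i ≤ T := by
    intro i hi
    refine ⟨?_, le_trans (hmono n le_rfl i hi) htdn⟩
    have := hmono i hi 0 (Nat.zero_le i)
    rwa [htd0] at this
  have hSpos : ∀ i, i ≤ n → 0 < S (td i) :=
    fun i hi => hS _ (hbd i hi).1 (hbd i hi).2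
  have hMpos : ∀ i, i ≤ n → 0 < M (td i) :=
    fun i hi => hM _ (hbd i hi).1 (hbd i hi).2
  have hDpos : ∀ i, i ≤ n → 0 < D (td i) :=
    fun i hi => hD _ (hbd i hi).1 (hbd i hi).2
  have hS0 : (0:ℝ) < S 0 := hS 0 le_rfl hT.le
  have hMT : (0:ℝ) < M T := hM T hT.le le_rfl
  have hDT : (0:ℝ) < D T := hD T hT.le le_rfl
  -- closed form at dividend dates, by induction
  have claim : ∀ k, 1 ≤ k → k ≤ n →
      Sd (td k) = (∏ j ∈ Finset.Icc 1 k, (1 - y j)) * S (td k)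
        - ∑ i ∈ Finset.Icc 1 k,
            δ i * (∏ j ∈ Finset.Icc (i + 1) k, (1 - y j)) * (S (td k) / S (td i)) := by
    intro k hk1
    induction k, hk1 using Nat.le_induction with
    | base =>
      intro h1n
      have h := hjump 1 le_rfl h1n
      norm_num at h
      have htd1pos : 0 < td 1 := by
        have := htdmono 0 (by omega)
        rwa [htd0] at this
      have hSd00 : Sd (td 0) = S (td 0) := by
        rw [htd0]; exact hSd0 0 le_rfl htd1pos
      rw [hSd00] at h
      have hS0' : S (td 0) ≠ 0 := (hSpos 0 (by omega)).ne'
      have hS1' : S (td 1) ≠ 0 := (hSpos 1 h1n).ne'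
      rw [h]
      rw [Finset.Icc_self, Finset.prod_singleton, Finset.sum_singleton]
      rw [show Finset.Icc 2 1 = (∅ : Finset ℕ) from Finset.Icc_eq_empty (by omega)]
      rw [Finset.prod_empty, div_self hS1']
      field_simp
    | succ k hk ih =>
      intro hkn
      have hk1n : k ≤ n := by omega
      have h := hjump (k + 1) (by omega) hkn
      simp only [Nat.add_sub_cancel] at h
      rw [ih hk1n] at h
      have hSk : S (td k) ≠ 0 := (hSpos k hk1n).ne'
      have hSk1 : S (td (k + 1)) ≠ 0 := (hSpos (k + 1) hkn).ne'
      rw [h]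
      rw [Finset.prod_Icc_succ_top (by omega : 1 ≤ k + 1),
          Finset.sum_Icc_succ_top (by omega : 1 ≤ k + 1)]
      rw [show Finset.Icc (k + 1 + 1) (k + 1) = (∅ : Finset ℕ) from
            Finset.Icc_eq_empty (by omega)]
      rw [Finset.prod_empty, div_self hSk1]
      have hsum : ∑ i ∈ Finset.Icc 1 k,
          δ i * (∏ j ∈ Finset.Icc (i + 1) (k + 1), (1 - y j)) * (S (td (k + 1)) / S (td i))
          = ∑ i ∈ Finset.Icc 1 k,
            (1 - y (k + 1)) * (δ i * (∏ j ∈ Finset.Icc (i + 1) k, (1 - y j))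
              * (S (td k) / S (td i))) * S (td (k + 1)) / S (td k) := by
        refine Finset.sum_congr rfl ?_
        intro i hi
        simp only [Finset.mem_Icc] at hi
        have hSi : S (td i) ≠ 0 := (hSpos i (by omega)).ne'
        rw [Finset.prod_Icc_succ_top (by omega : i + 1 ≤ k + 1)]
        field_simp
      rw [hsum, ← Finset.sum_div, ← Finset.sum_mul, ← Finset.mul_sum]
      field_simp
      ring
  -- value at maturity
  have hSdT : Sd T = Sd (td n) * S T / S (td n) :=
    hprop n hn le_rfl T htdn (Or.inr ⟨rfl, le_rfl⟩)
  have hSn : S (td n) ≠ 0 := (hSpos n le_rfl).ne'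
  have hST : S T ≠ 0 := (hS T hT.le le_rfl).ne'
  have hA : Sd T = (∏ j ∈ Finset.Icc 1 n, (1 - y j)) * S T
      - ∑ i ∈ Finset.Icc 1 n,
          δ i * (∏ j ∈ Finset.Icc (i + 1) n, (1 - y j)) * (S T / S (td i)) := by
    rw [hSdT, claim n hn le_rfl]
    have hsum : ∑ i ∈ Finset.Icc 1 n,
        δ i * (∏ j ∈ Finset.Icc (i + 1) n, (1 - y j)) * (S T / S (td i))
        = ∑ i ∈ Finset.Icc 1 n,
          δ i * (∏ j ∈ Finset.Icc (i + 1) n, (1 - y j)) * (S (td n) / S (td i))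
            * S T / S (td n) := by
      refine Finset.sum_congr rfl ?_
      intro i hi
      simp only [Finset.mem_Icc] at hi
      have hSi : S (td i) ≠ 0 := (hSpos i (by omega)).ne'
      field_simp
    rw [hsum, ← Finset.sum_div, ← Finset.sum_mul]
    field_simp
  rw [hA]
  -- now pure algebra on the right-hand side
  have hSTval : S T = S 0 * M T / D T := hSM T hT.le le_rfl
  have E : ∑ i ∈ Finset.Icc 1 n,
      (((T - td i) / T) * (δ i * (∏ j ∈ Finset.Icc (i + 1) n, (1 - y j)) * D (td i) / D T)
          * (M T - M T / M (td i))
        + (td i / T) * (δ i * (∏ j ∈ Finset.Icc (i + 1) n, (1 - y j)) * D (td i) / D T)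
          * (1 - M T / M (td i))
        - ((T - td i) / T) * (δ i * (∏ j ∈ Finset.Icc (i + 1) n, (1 - y j)) * D (td i) / D T)
          * M T
        - (td i / T) * (δ i * (∏ j ∈ Finset.Icc (i + 1) n, (1 - y j)) * D (td i) / D T))
      = ∑ i ∈ Finset.Icc 1 n,
        -(δ i * (∏ j ∈ Finset.Icc (i + 1) n, (1 - y j)) * (S T / S (td i))) := by
    refine Finset.sum_congr rfl ?_
    intro i hi
    simp only [Finset.mem_Icc] at hi
    have hMi : M (td i) ≠ 0 := (hMpos i hi.2).ne'
    have hDi : D (td i) ≠ 0 := (hDpos i hi.2).ne'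
    have hSivals : S (td i) = S 0 * M (td i) / D (td i) :=
      hSM (td i) (hbd i hi.2).1 (hbd i hi.2).2
    rw [hSTval, hSivals]
    field_simp
    ring
  simp only [Finset.sum_sub_distrib, Finset.sum_add_distrib, Finset.sum_neg_distrib] at E
  have hP : (∏ j ∈ Finset.Icc 1 n, (1 - y j)) * S T
      = (∏ j ∈ Finset.Icc 1 n, (1 - y j)) * S 0 / D T * M T := by
    rw [hSTval]; field_simp
  rw [sub_mul, Finset.sum_mul, hP] at *
  linarith [E]
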